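/- If the function c : X×A → ℝ ∪ {+∞} is bounded from below and lower semi-continuous on X×A, then the function c̄ : P(X)×A → ℝ ∪ {+∞}, defined by c̄(z,a) = ∫_X c(x,a) z(dx), is bounded from below (by the same bound) and lower semi-continuous on P(X)×A, where P(X) carries the topology of weak convergence. -/

import Mathlib

open MeasureTheory Filter Topology
open scoped ENNReal NNReal

/-- The nonnegative part of an extended real number, as an element of `[0,∞]`. -/
noncomputable def erealPart (x : EReal) : ℝ≥0∞ :=
  if x = ⊤ then ⊤ else ENNReal.ofReal x.toReal

/-- The Lebesgue integral of an `ℝ ∪ {±∞}`-valued function `f`, defined as `∫ f⁺ − ∫ f⁻`. -/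
noncomputable def eIntegral {S : Type*} [MeasurableSpace S] (μ : Measure S)
    (f : S → EReal) : EReal :=
  ((∫⁻ s, erealPart (f s) ∂μ : ℝ≥0∞) : EReal) - ((∫⁻ s, erealPart (-f s) ∂μ : ℝ≥0∞) : EReal)

/-- The one-step cost `c̄(z,a) = ∫_X c(x,a) z(dx)` of the COMDP. -/
noncomputable def cbar {X A : Type*} [MeasurableSpace X]
    (c : X × A → EReal) (z : ProbabilityMeasure X) (a : A) : EReal :=
  eIntegral (z : Measure X) fun x => c (x, a)




lemma erealPart_coe (r : ℝ) : erealPart (r : EReal) = ENNReal.ofReal r := by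
  simp [erealPart]

lemma erealPart_bot : erealPart ⊥ = 0 := by simp [erealPart]

lemma erealPart_top : erealPart ⊤ = ⊤ := by simp [erealPart]

lemma erealPart_ne_top {x : EReal} (hx : x ≠ ⊤) : erealPart x ≠ ⊤ := by
  simp [erealPart, hx]

lemma lt_erealPart_iff {b : ℝ≥0∞} (hb : b ≠ ⊤) (x : EReal) :
    b < erealPart x ↔ ((b.toReal : ℝ) : EReal) < x := by
  induction x using EReal.rec with
  | bot => simp [erealPart_bot]
  | coe r =>
    rw [erealPart_coe, EReal.coe_lt_coe_iff]
    exact ENNReal.lt_ofReal_iff_toReal_lt hb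
  | top => simpa [erealPart_top] using hb.lt_top

lemma erealPart_lt_iff {b : ℝ≥0∞} (hb : b ≠ ⊤) (hb0 : b ≠ 0) (x : EReal) :
    erealPart x < b ↔ x < ((b.toReal : ℝ) : EReal) := by
  induction x using EReal.rec with
  | bot => simp [erealPart_bot, pos_iff_ne_zero, hb0]
  | coe r =>
    rw [erealPart_coe, EReal.coe_lt_coe_iff]
    rcases le_or_gt r 0 with hr | hr
    · simp only [ENNReal.ofReal_of_nonpos hr]
      have : (0:ℝ) < b.toReal := ENNReal.toReal_pos hb0 hb
      simp [pos_iff_ne_zero, hb0, lt_of_le_of_lt hr this]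
    · exact ENNReal.ofReal_lt_iff_lt_toReal hr.le hb
  | top => simp [erealPart_top, hb.lt_top.ne]

lemma erealPart_monotone : Monotone erealPart := by
  intro x y h
  rcases eq_or_ne y ⊤ with rfl | hy
  · simp [erealPart_top]
  have hx : x ≠ ⊤ := fun hx => hy (top_le_iff.mp (hx ▸ h))
  rcases eq_or_ne x ⊥ with rfl | hx'
  · simp [erealPart_bot]
  rcases eq_or_ne y ⊥ with rfl | hy'
  · simp [le_bot_iff.mp h, erealPart_bot]
  simp only [erealPart, hx, hy, if_false]
  exact ENNReal.ofReal_le_ofReal (EReal.toReal_le_toReal h hx' hy)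

lemma erealPart_continuous : Continuous erealPart := by
  rw [continuous_iff_continuousAt]
  intro x
  rw [ContinuousAt, tendsto_order]
  constructor
  · intro b hb
    have hb' : b ≠ ⊤ := hb.ne_top
    have h1 : ((b.toReal : ℝ) : EReal) < x := (lt_erealPart_iff hb' x).1 hb
    filter_upwards [Ioi_mem_nhds h1] with y hy
    exact (lt_erealPart_iff hb' y).2 hy
  · intro b hb
    have hb0 : b ≠ 0 := fun h => by simp [h] at hb
    rcases eq_or_ne b ⊤ with rfl | hb'
    · have hx : x ≠ ⊤ := fun h => by simp [h, erealPart_top] at hb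
      filter_upwards [Iio_mem_nhds (lt_top_iff_ne_top.2 hx)] with y hy
      exact lt_top_iff_ne_top.2 (erealPart_ne_top hy.ne)
    · have h1 : x < ((b.toReal : ℝ) : EReal) := (erealPart_lt_iff hb' hb0 x).1 hb
      filter_upwards [Iio_mem_nhds h1] with y hy
      exact (erealPart_lt_iff hb' hb0 y).2 hy

lemma erealPart_measurable : Measurable erealPart := erealPart_continuous.measurable


noncomputable def lscApprox {Z : Type*} [PseudoEMetricSpace Z] (h : Z → ℝ≥0∞) (n : ℕ) (p : Z) :
    ℝ≥0∞ :=
  ⨅ q, (min (h q) n + n * edist p q)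

lemma lscApprox_le {Z : Type*} [PseudoEMetricSpace Z] (h : Z → ℝ≥0∞) (n : ℕ) (p : Z) :
    lscApprox h n p ≤ min (h p) n := by
  simpa [lscApprox] using iInf_le (fun q => min (h q) n + n * edist p q) p

lemma lscApprox_mono {Z : Type*} [PseudoEMetricSpace Z] (h : Z → ℝ≥0∞) :
    Monotone (fun n => lscApprox h n) := by
  intro n m hnm
  intro p
  refine iInf_mono fun q => ?_
  have : (n : ℝ≥0∞) ≤ m := by exact_mod_cast hnm
  gcongr

lemma lscApprox_lip {Z : Type*} [PseudoEMetricSpace Z] (h : Z → ℝ≥0∞) (n : ℕ) (p p' : Z) :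
    lscApprox h n p ≤ lscApprox h n p' + n * edist p p' := by
  rw [lscApprox, lscApprox, ENNReal.iInf_add]
  refine le_iInf fun q => iInf_le_of_le q ?_
  have ht : edist p q ≤ edist p p' + edist p' q := edist_triangle _ _ _
  calc min (h q) n + n * edist p q ≤ min (h q) n + n * (edist p p' + edist p' q) := by gcongr
    _ = min (h q) n + n * edist p' q + n * edist p p' := by ring

lemma iSup_lscApprox {Z : Type*} [PseudoEMetricSpace Z] (h : Z → ℝ≥0∞)
    (hlsc : LowerSemicontinuous h) (p : Z) : ⨆ n, lscApprox h n p = h p := by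
  refine le_antisymm (iSup_le fun n => (lscApprox_le h n p).trans (min_le_left _ _)) ?_
  refine le_of_forall_lt fun y hy => ?_
  obtain ⟨y', hyy', hy'⟩ := exists_between hy
  have hy'top : y' ≠ ⊤ := hy'.ne_top
  -- lower semicontinuity gives a ball on which h > y'
  have hev : ∀ᶠ q in 𝓝 p, y' < h q := hlsc p y' hy'
  obtain ⟨δ₀, hδ₀pos, hδ₀⟩ := EMetric.mem_nhds_iff.1 hev
  set δ : ℝ≥0∞ := min δ₀ 1 with hδdef
  have hδpos : 0 < δ := lt_min hδ₀pos zero_lt_one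
  have hδtop : δ ≠ ⊤ := (min_le_right _ _).trans_lt ENNReal.one_lt_top |>.ne
  have hball : ∀ q : Z, edist q p < δ → y' < h q := fun q hq =>
    hδ₀ (lt_of_lt_of_le hq (min_le_left _ _))
  -- choose n large
  obtain ⟨n₁, hn₁⟩ := ENNReal.exists_nat_gt hy'top
  have hdivtop : y' / δ ≠ ⊤ := by
    simp only [Ne, ENNReal.div_eq_top]
    push_neg
    exact ⟨fun _ => hδpos.ne', fun hy't => absurd hy't hy'top⟩
  obtain ⟨n₂, hn₂⟩ := ENNReal.exists_nat_gt hdivtop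
  set n := max n₁ n₂ with hn
  have key : y' ≤ lscApprox h n p := by
    refine le_iInf fun q => ?_
    rcases lt_or_ge (edist q p) δ with hq | hq
    · have h1 : y' ≤ min (h q) n := le_min (hball q hq).le
        (hn₁.le.trans (by exact_mod_cast Nat.cast_le.2 (le_max_left n₁ n₂)))
      exact h1.trans le_self_add
    · have h1 : y' ≤ (n : ℝ≥0∞) * edist p q := by
        have : y' ≤ (n₂ : ℝ≥0∞) * δ := by
          conv_lhs => rw [← ENNReal.div_mul_cancel hδpos.ne' hδtop (b := y')]
          exact mul_le_mul_left hn₂.le _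
        refine this.trans (mul_le_mul' ?_ ?_)
        · exact_mod_cast Nat.cast_le.2 (le_max_right n₁ n₂)
        · rwa [edist_comm] at hq
      exact h1.trans le_add_self
  exact lt_of_lt_of_le hyy' (key.trans (le_iSup (fun n => lscApprox h n p) n))

lemma lscApprox_continuous {Z : Type*} [PseudoEMetricSpace Z] (h : Z → ℝ≥0∞) (n : ℕ) :
    Continuous (lscApprox h n) := by
  rw [continuous_iff_continuousAt]
  intro p
  have hfin : lscApprox h n p ≠ ⊤ :=
    (((lscApprox_le h n p).trans (min_le_right _ _)).trans_lt (ENNReal.natCast_lt_top n)).ne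
  rw [ContinuousAt, ENNReal.tendsto_nhds hfin]
  intro ε hε
  set δ : ℝ≥0∞ := min (ε / (n + 1)) 1 with hδdef
  have hδpos : 0 < δ := lt_min (ENNReal.div_pos hε.ne' (by simp)) zero_lt_one
  have hnδ : (n : ℝ≥0∞) * δ ≤ ε := by
    calc (n : ℝ≥0∞) * δ ≤ (n + 1) * (ε / (n + 1)) := by
          gcongr
          · exact le_self_add
          · exact min_le_left _ _
      _ = ε := ENNReal.mul_div_cancel' (by simp) (by simp)
  filter_upwards [EMetric.ball_mem_nhds p hδpos] with q hq
  rw [EMetric.mem_ball] at hq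
  constructor
  · rw [tsub_le_iff_right]
    calc lscApprox h n p ≤ lscApprox h n q + n * edist p q := lscApprox_lip h n p q
      _ ≤ lscApprox h n q + ε := by
          refine add_le_add_right (le_trans ?_ hnδ) _
          rw [edist_comm]
          exact mul_le_mul_right hq.le _
  · calc lscApprox h n q ≤ lscApprox h n p + n * edist q p := lscApprox_lip h n q p
      _ ≤ lscApprox h n p + ε := add_le_add_right ((mul_le_mul_right hq.le _).trans hnδ) _

lemma core_lsc {X A : Type*}
    [MetricSpace X] [SecondCountableTopology X] [MeasurableSpace X] [BorelSpace X]
    [MetricSpace A]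
    (h : X × A → ℝ≥0∞) (hlsc : LowerSemicontinuous h) :
    LowerSemicontinuous (fun p : ProbabilityMeasure X × A =>
      ∫⁻ x, h (x, p.2) ∂(p.1 : Measure X)) := by
  have hcontsec : ∀ (n : ℕ) (a : A), Continuous fun x : X => lscApprox h n (x, a) :=
    fun n a => (lscApprox_continuous h n).comp (continuous_id.prodMk continuous_const)
  have hrw : (fun p : ProbabilityMeasure X × A => ∫⁻ x, h (x, p.2) ∂(p.1 : Measure X))
      = fun p : ProbabilityMeasure X × A =>
        ⨆ n, ∫⁻ x, lscApprox h n (x, p.2) ∂(p.1 : Measure X) := by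
    funext p
    calc ∫⁻ x, h (x, p.2) ∂(p.1 : Measure X)
        = ∫⁻ x, ⨆ n, lscApprox h n (x, p.2) ∂(p.1 : Measure X) := by
          congr 1; funext x; exact (iSup_lscApprox h hlsc _).symm
      _ = ⨆ n, ∫⁻ x, lscApprox h n (x, p.2) ∂(p.1 : Measure X) :=
          lintegral_iSup (fun n => (hcontsec n p.2).measurable)
            (fun n m hnm x => lscApprox_mono h hnm _)
  rw [hrw]
  refine lowerSemicontinuous_iSup fun n => ?_
  rintro ⟨z₀, a₀⟩ y hy
  set G : X → ℝ≥0∞ := fun x => lscApprox h n (x, a₀) with hGdef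
  have hGfin : ∀ x, G x ≠ ⊤ :=
    fun x => (((lscApprox_le h n _).trans (min_le_right _ _)).trans_lt
      (ENNReal.natCast_lt_top n)).ne
  have hGle : ∀ x, G x ≤ (n : ℝ≥0∞) := fun x => (lscApprox_le h n _).trans (min_le_right _ _)
  obtain ⟨c, hyc, hc⟩ := exists_between hy
  have hcn : c < (n : ℝ≥0∞) + 1 := by
    refine hc.trans_le ?_
    calc ∫⁻ x, G x ∂(z₀ : Measure X) ≤ ∫⁻ _, (n : ℝ≥0∞) ∂(z₀ : Measure X) :=
          lintegral_mono fun x => hGle x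
      _ ≤ (n : ℝ≥0∞) + 1 := by simp
  have hctop : c ≠ ⊤ := (hcn.trans_le le_top).ne
  have hGcont : Continuous G := hcontsec n a₀
  have hcont' : Continuous fun x => (G x).toNNReal := by
    rw [continuous_iff_continuousAt]
    exact fun x => (ENNReal.tendsto_toNNReal (hGfin x)).comp hGcont.continuousAt
  set f : BoundedContinuousFunction X ℝ≥0 :=
    BoundedContinuousFunction.mkOfBound ⟨fun x => (G x).toNNReal, hcont'⟩ n (by
      intro x x'
      have b1 : ((G x).toNNReal : ℝ) ≤ (n : ℝ) := by
        have := hGle x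
        rw [← ENNReal.coe_toNNReal (hGfin x)] at this
        exact_mod_cast this
      have b2 : ((G x').toNNReal : ℝ) ≤ (n : ℝ) := by
        have := hGle x'
        rw [← ENNReal.coe_toNNReal (hGfin x')] at this
        exact_mod_cast this
      have b3 : (0:ℝ) ≤ ((G x).toNNReal : ℝ) := NNReal.coe_nonneg _
      have b4 : (0:ℝ) ≤ ((G x').toNNReal : ℝ) := NNReal.coe_nonneg _
      rw [NNReal.dist_eq, abs_sub_le_iff]
      constructor <;> simp only [ContinuousMap.coe_mk] <;> linarith) with hfdef
  have hfcoe : ∀ x, ((f x : ℝ≥0) : ℝ≥0∞) = G x := fun x => ENNReal.coe_toNNReal (hGfin x)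
  have tz : Tendsto (fun z : ProbabilityMeasure X => ∫⁻ x, G x ∂(z : Measure X)) (𝓝 z₀)
      (𝓝 (∫⁻ x, G x ∂(z₀ : Measure X))) := by
    have := MeasureTheory.ProbabilityMeasure.tendsto_iff_forall_lintegral_tendsto.mp
      (tendsto_id (x := 𝓝 z₀)) f
    simpa only [hfcoe, id_eq] using this
  have hev1 : ∀ᶠ z : ProbabilityMeasure X in 𝓝 z₀, c < ∫⁻ x, G x ∂(z : Measure X) :=
    tz.eventually_const_lt hc
  have hε : (0:ℝ≥0∞) < c - y := tsub_pos_of_lt hyc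
  set δ : ℝ≥0∞ := min ((c - y) / (n + 1)) 1 with hδdef
  have hδpos : 0 < δ := lt_min (ENNReal.div_pos hε.ne' (by simp)) zero_lt_one
  have hnδ : (n : ℝ≥0∞) * δ ≤ c - y := by
    calc (n : ℝ≥0∞) * δ ≤ (n + 1) * ((c - y) / (n + 1)) := by
          gcongr
          · exact le_self_add
          · exact min_le_left _ _
      _ = c - y := ENNReal.mul_div_cancel' (by simp) (by simp)
  filter_upwards [prod_mem_nhds hev1 (EMetric.ball_mem_nhds a₀ hδpos)] with p hp
  obtain ⟨z, a⟩ := p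
  obtain ⟨hp1, hp2⟩ := hp
  rw [EMetric.mem_ball] at hp2
  by_contra hcon
  push_neg at hcon
  have step : ∫⁻ x, G x ∂(z : Measure X)
      ≤ ∫⁻ x, lscApprox h n (x, a) ∂(z : Measure X) + (n : ℝ≥0∞) * edist a₀ a := by
    calc ∫⁻ x, G x ∂(z : Measure X)
        ≤ ∫⁻ x, (lscApprox h n (x, a) + (n : ℝ≥0∞) * edist a₀ a) ∂(z : Measure X) := by
          refine lintegral_mono fun x => ?_
          have hlip := lscApprox_lip h n (x, a₀) (x, a)
          have hed : edist ((x : X), a₀) (x, a) = edist a₀ a := by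
            simp [Prod.edist_eq, edist_self]
          rwa [hed] at hlip
      _ = _ := by
          rw [lintegral_add_right _ measurable_const]
          simp
  have : c < c := by
    calc c < ∫⁻ x, G x ∂(z : Measure X) := hp1
      _ ≤ y + (n : ℝ≥0∞) * edist a₀ a := step.trans (add_le_add_left hcon _)
      _ ≤ y + (c - y) := by
          refine add_le_add_right (le_trans ?_ hnδ) _
          rw [edist_comm] at hp2
          exact mul_le_mul_right hp2.le _
      _ = c := add_tsub_cancel_of_le hyc.le
  exact absurd this (lt_irrefl c)

lemma coe_ennreal_of_ne_top {x : ℝ≥0∞} (hx : x ≠ ⊤) :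
    (x : EReal) = ((x.toReal : ℝ) : EReal) := by
  conv_lhs => rw [← ENNReal.ofReal_toReal hx]
  rw [EReal.coe_ennreal_ofReal, max_eq_left ENNReal.toReal_nonneg]

lemma erealPart_neg_le {K : ℝ} {x : EReal} (hK : (K : EReal) ≤ x) :
    erealPart (-x) ≤ ENNReal.ofReal (max (-K) 0) := by
  induction x using EReal.rec with
  | bot => simp at hK
  | coe r =>
    rw [← EReal.coe_neg, erealPart_coe]
    have hKr : K ≤ r := by exact_mod_cast hK
    exact ENNReal.ofReal_le_ofReal (le_max_of_le_left (by linarith))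
  | top => simp [erealPart_bot]

lemma le_part_add {K : ℝ} {x : EReal} (hK : (K : EReal) ≤ x) :
    ENNReal.ofReal (K + max (-K) 0)
      ≤ erealPart x + (ENNReal.ofReal (max (-K) 0) - erealPart (-x)) := by
  induction x using EReal.rec with
  | bot => simp at hK
  | top => simp [erealPart_top]
  | coe r =>
    have hKr : K ≤ r := by exact_mod_cast hK
    rw [erealPart_coe, ← EReal.coe_neg, erealPart_coe]
    rcases le_or_gt 0 r with hr | hr
    · rw [ENNReal.ofReal_of_nonpos (by linarith : -r ≤ 0), tsub_zero,
        ← ENNReal.ofReal_add hr (le_max_right _ _)]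
      exact ENNReal.ofReal_le_ofReal (by linarith)
    · rw [ENNReal.ofReal_of_nonpos hr.le, zero_add,
        ← ENNReal.ofReal_sub _ (neg_nonneg.2 hr.le)]
      exact ENNReal.ofReal_le_ofReal (by linarith)

lemma eIntegral_eq {S : Type*} [MeasurableSpace S] (μ : Measure S) [IsProbabilityMeasure μ]
    (f : S → EReal) (hf : Measurable f) (K : ℝ) (hK : ∀ s, (K : EReal) ≤ f s) :
    eIntegral μ f =
      ((∫⁻ s, (erealPart (f s) + (ENNReal.ofReal (max (-K) 0) - erealPart (-f s))) ∂μ :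
        ℝ≥0∞) : EReal) - ((max (-K) 0 : ℝ) : EReal) := by
  set M := max (-K) 0 with hM
  set Mnn := ENNReal.ofReal M with hMnndef
  have hMnn_top : Mnn ≠ ⊤ := ENNReal.ofReal_ne_top
  have hmeas1 : Measurable fun s => erealPart (f s) := erealPart_measurable.comp hf
  have hmeas2 : Measurable fun s => erealPart (-f s) :=
    erealPart_measurable.comp ((continuous_neg (G := EReal)).measurable.comp hf)
  set P := ∫⁻ s, erealPart (f s) ∂μ with hP'
  set N := ∫⁻ s, erealPart (-f s) ∂μ with hN'
  have hNle : N ≤ Mnn := by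
    calc N ≤ ∫⁻ _, Mnn ∂μ := lintegral_mono fun s => erealPart_neg_le (hK s)
      _ = Mnn := by simp
  have hNtop : N ≠ ⊤ := (hNle.trans_lt hMnn_top.lt_top).ne
  have hsplit : ∫⁻ s, (erealPart (f s) + (Mnn - erealPart (-f s))) ∂μ = P + (Mnn - N) := by
    rw [lintegral_add_left hmeas1]
    congr 1
    rw [lintegral_sub hmeas2 hNtop (Eventually.of_forall fun s => erealPart_neg_le (hK s))]
    rw [lintegral_const, measure_univ, mul_one]
  rw [hsplit, eIntegral, ← hP', ← hN']
  rcases eq_or_ne P ⊤ with hP | hP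
  · rw [hP, top_add, EReal.coe_ennreal_top, coe_ennreal_of_ne_top hNtop,
      EReal.top_sub_coe, EReal.top_sub_coe]
  · have hsubtop : Mnn - N ≠ ⊤ := (tsub_le_self.trans_lt hMnn_top.lt_top).ne
    have hPN : P + (Mnn - N) ≠ ⊤ := ENNReal.add_ne_top.2 ⟨hP, hsubtop⟩
    rw [coe_ennreal_of_ne_top hP, coe_ennreal_of_ne_top hNtop, coe_ennreal_of_ne_top hPN,
      ← EReal.coe_sub, ← EReal.coe_sub]
    have h1 : (P + (Mnn - N)).toReal = P.toReal + (Mnn - N).toReal :=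
      ENNReal.toReal_add hP hsubtop
    have h2 : (Mnn - N).toReal = M - N.toReal := by
      rw [ENNReal.toReal_sub_of_le hNle hMnn_top, hMnndef,
        ENNReal.toReal_ofReal (le_max_right _ _)]
    rw [EReal.coe_eq_coe_iff]
    rw [h1, h2]
    ring

/-- **Lemma (preservation of lower semicontinuity).**
If `c : X×A → ℝ ∪ {+∞}` is bounded below and lower semicontinuous on `X×A`, then
`c̄(z,a) = ∫_X c(x,a) z(dx)` is bounded below by the same bound and lower semicontinuous
on `P(X)×A`, where `P(X)` carries the topology of weak convergence. -/
theorem cbar_lowerSemicontinuous {X A : Type*}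
    [MetricSpace X] [SecondCountableTopology X] [MeasurableSpace X] [BorelSpace X]
    [MetricSpace A] [SecondCountableTopology A] [MeasurableSpace A] [BorelSpace A]
    (c : X × A → EReal) (hcmeas : Measurable c)
    (K : ℝ) (hbdd : ∀ p, (K : EReal) ≤ c p)
    (hlsc : LowerSemicontinuous c) :
    (∀ (z : ProbabilityMeasure X) (a : A), (K : EReal) ≤ cbar c z a) ∧
    LowerSemicontinuous (fun p : ProbabilityMeasure X × A => cbar c p.1 p.2) := by
  set M : ℝ := max (-K) 0 with hM
  set Mnn : ℝ≥0∞ := ENNReal.ofReal M with hMnn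
  set h : X × A → ℝ≥0∞ := fun p => erealPart (c p) + (Mnn - erealPart (-c p)) with hh
  have hKM : 0 ≤ K + M := by
    have := le_max_left (-K) 0
    simp only [hM]; linarith
  have hident : ∀ (z : ProbabilityMeasure X) (a : A),
      cbar c z a = ((∫⁻ x, h (x, a) ∂(z : Measure X) : ℝ≥0∞) : EReal) - (M : EReal) := by
    intro z a
    exact eIntegral_eq (z : Measure X) (fun x => c (x, a))
      (hcmeas.comp (measurable_id.prodMk measurable_const)) K (fun x => hbdd (x, a))
  constructor
  · intro z a
    rw [hident z a]
    have hT : ENNReal.ofReal (K + M) ≤ ∫⁻ x, h (x, a) ∂(z : Measure X) := by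
      calc ENNReal.ofReal (K + M)
          = ∫⁻ _, ENNReal.ofReal (K + M) ∂(z : Measure X) := by simp
        _ ≤ _ := lintegral_mono fun x => le_part_add (hbdd (x, a))
    have h1 : ((K + M : ℝ) : EReal) ≤ ((∫⁻ x, h (x, a) ∂(z : Measure X) : ℝ≥0∞) : EReal) := by
      calc ((K + M : ℝ) : EReal) = ((ENNReal.ofReal (K + M) : ℝ≥0∞) : EReal) := by
            rw [EReal.coe_ennreal_ofReal, max_eq_left hKM]
        _ ≤ _ := EReal.coe_ennreal_le_coe_ennreal_iff.2 hT
    calc (K : EReal) = ((K + M : ℝ) : EReal) - (M : EReal) := by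
          rw [← EReal.coe_sub]; norm_num
      _ ≤ _ := EReal.sub_le_sub h1 le_rfl
  · have hlsch : LowerSemicontinuous h := by
      have l1 : LowerSemicontinuous fun p : X × A => erealPart (c p) :=
        erealPart_continuous.comp_lowerSemicontinuous hlsc erealPart_monotone
      have l2 : LowerSemicontinuous fun p : X × A => Mnn - erealPart (-c p) := by
        have u1 : UpperSemicontinuous fun p : X × A => erealPart (-c p) := by
          have hcont : Continuous fun e : EReal => erealPart (-e) :=
            erealPart_continuous.comp (continuous_neg (G := EReal))
          have anti : Antitone fun e : EReal => erealPart (-e) := fun a b hab =>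
            erealPart_monotone (EReal.neg_le_neg_iff.2 hab)
          exact hcont.comp_lowerSemicontinuous_antitone hlsc anti
        have hcont2 : Continuous fun t : ℝ≥0∞ => Mnn - t :=
          ENNReal.continuous_sub_left ENNReal.ofReal_ne_top
        exact hcont2.comp_upperSemicontinuous_antitone u1
          (fun a b hab => tsub_le_tsub_left hab _)
      exact l1.add l2
    have lF := core_lsc h hlsch
    have heq : (fun p : ProbabilityMeasure X × A => cbar c p.1 p.2)
        = (fun t : ℝ≥0∞ => (t : EReal) - (M : EReal)) ∘
          (fun p : ProbabilityMeasure X × A => ∫⁻ x, h (x, p.2) ∂(p.1 : Measure X)) := by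
      funext p; exact hident p.1 p.2
    rw [heq]
    refine Continuous.comp_lowerSemicontinuous ?_ lF ?_
    · have c1 : Continuous fun e : EReal => e - (M : EReal) := by
        simp_rw [sub_eq_add_neg]
        rw [continuous_iff_continuousAt]
        intro e
        have h2 : ContinuousAt (fun q : EReal × EReal => q.1 + q.2) (e, -(M : EReal)) :=
          EReal.continuousAt_add (by simp) (by simp)
        have h3 : ContinuousAt (fun x : EReal => (x, -(M : EReal))) e :=
          continuousAt_id.prodMk continuousAt_const
        exact ContinuousAt.comp (f := fun x : EReal => (x, -(M : EReal)))
          (g := fun q : EReal × EReal => q.1 + q.2) h2 h3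
      exact c1.comp (EReal.continuous_coe_ennreal_iff.2 continuous_id)
    · intro a b hab
      exact EReal.sub_le_sub (EReal.coe_ennreal_le_coe_ennreal_iff.2 hab) le_rfl
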